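/- If X is a copositive p×p matrix and τ is a zero of X (i.e., τ ≥ 0, τ ≠ 0, τᵀXτ = 0), then Xτ ≥ 0 componentwise. -/

import Mathlib

open Matrix BigOperators

/-- A symmetric real matrix is copositive if `tᵀXt ≥ 0` for all nonnegative `t`. -/
def Copositive {p : ℕ} (X : Matrix (Fin p) (Fin p) ℝ) : Prop :=
  ∀ t : Fin p → ℝ, (∀ k, 0 ≤ t k) → 0 ≤ t ⬝ᵥ X.mulVec t

/-- A zero of `X` is a nonzero nonnegative vector `τ` with `τᵀXτ = 0`. -/
def IsZeroOf {p : ℕ} (X : Matrix (Fin p) (Fin p) ℝ) (τ : Fin p → ℝ) : Prop :=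
  (∀ k, 0 ≤ τ k) ∧ τ ≠ 0 ∧ τ ⬝ᵥ X.mulVec τ = 0

theorem zero_of_copositive_mulVec_nonneg {p : ℕ} (X : Matrix (Fin p) (Fin p) ℝ)
    (hX : X.IsSymm) (hcop : Copositive X) (τ : Fin p → ℝ) (hτ : IsZeroOf X τ) :
    ∀ k, 0 ≤ X.mulVec τ k := by
  obtain ⟨hpos, -, hquad⟩ := hτ
  intro k
  by_contra h
  push_neg at h
  set a := X.mulVec τ k with ha
  set c := X k k with hc
  set ε : ℝ := -a / (|c| + 1) with hε
  have habs : (0:ℝ) < |c| + 1 := by positivity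
  have hεpos : 0 < ε := by
    apply div_pos (by linarith) habs
  -- symmetry fact
  have hsym : τ ⬝ᵥ X.mulVec (Pi.single k 1) = a := by
    rw [Matrix.dotProduct_mulVec, ← Matrix.mulVec_transpose, hX.eq]
    simp [ha, dotProduct_single, single_dotProduct]
  have hcol : Pi.single k 1 ⬝ᵥ X.mulVec τ = a := by
    simp [single_dotProduct, ha]
  have hdiag : Pi.single k 1 ⬝ᵥ X.mulVec (Pi.single k 1) = c := by
    have : X.mulVec (Pi.single k 1) k = c := by
      simp [Matrix.mulVec, dotProduct_single, hc]
    simp [single_dotProduct, this, hc]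
  set t : Fin p → ℝ := τ + ε • (Pi.single k 1 : Fin p → ℝ) with ht
  have htnn : ∀ j, 0 ≤ t j := by
    intro j
    have : 0 ≤ (Pi.single k 1 : Fin p → ℝ) j := by
      rcases eq_or_ne j k with rfl | hjk
      · simp
      · simp [Pi.single_eq_of_ne hjk]
    have := hpos j
    simp only [ht, Pi.add_apply, Pi.smul_apply, smul_eq_mul]
    nlinarith
  have hexp : t ⬝ᵥ X.mulVec t = ε * (2 * a + ε * c) := by
    simp only [ht, Matrix.mulVec_add, Matrix.mulVec_smul, dotProduct_add,
      add_dotProduct, dotProduct_smul, smul_dotProduct,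
      smul_eq_mul, hquad, hsym, hcol, hdiag]
    ring
  have hkey : ε * c < -a := by
    have h1 : ε * c ≤ ε * |c| := by
      have := le_abs_self c
      nlinarith
    have h2 : ε * |c| < ε * (|c| + 1) := by nlinarith
    have h3 : ε * (|c| + 1) = -a := by
      rw [hε, div_mul_cancel₀ _ habs.ne']
    linarith
  have hneg : t ⬝ᵥ X.mulVec t < 0 := by
    rw [hexp]
    have : 2 * a + ε * c < 0 := by linarith
    nlinarith
  exact absurd (hcop t htnn) (not_le.mpr hneg)
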